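/- arXiv:1902.03166 — 2 statements merged into one kernel-verified Lean document; each statement's English description precedes it below -/
import Mathlib

section
/- Suppose an arrangement of n lines contains no two parallel lines, and the triangle formed by lines ℓ₁, ℓ₂, ℓ₃ has maximum area among all triangles of the arrangement. Then all maximum-area triangles supported by ℓ₁ lie on the same (closed) side of ℓ₁. -/
open scoped Classical

/-- A line in the plane given by the equation `a·x + b·y = c` with `(a,b) ≠ (0,0)`. -/
structure Line where
  a : ℝ
  b : ℝ
  c : ℝ
  hab : (a, b) ≠ (0, 0)

namespace Line

/-- The set of points of a line. -/
def pts (L : Line) : Set (ℝ × ℝ) := {p | L.a * p.1 + L.b * p.2 = L.c}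

/-- The determinant of the directions of two lines. -/
def lineDet (L M : Line) : ℝ := L.a * M.b - L.b * M.a

/-- Two lines are parallel (possibly equal) when their directions are proportional. -/
def Parallel (L M : Line) : Prop := lineDet L M = 0

/-- The intersection point of two non-parallel lines. -/
noncomputable def inter (L M : Line) : ℝ × ℝ :=
  ((L.c * M.b - M.c * L.b) / lineDet L M, (L.a * M.c - M.a * L.c) / lineDet L M)

end Line

/-- Standard Euclidean area of the triangle with vertices `p`, `q`, `r`. -/
noncomputable def triangleArea (p q r : ℝ × ℝ) : ℝ :=
  |(q.1 - p.1) * (r.2 - p.2) - (r.1 - p.1) * (q.2 - p.2)| / 2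

/-- The area of the triangle determined by three (pairwise non-parallel) lines. -/
noncomputable def triArea (L M N : Line) : ℝ :=
  triangleArea (Line.inter L M) (Line.inter L N) (Line.inter M N)

/-- Three lines form a (non-degenerate) triangle when they are pairwise
non-parallel and not concurrent. -/
def FormsTriangle (L M N : Line) : Prop :=
  ¬ Line.Parallel L M ∧ ¬ Line.Parallel L N ∧ ¬ Line.Parallel M N ∧
    Line.inter L M ∉ N.pts

/-- The open region bounded by the triangle formed by three lines: the interior
of the convex hull of the three pairwise intersection points. -/
noncomputable def openTriangle (L M N : Line) : Set (ℝ × ℝ) :=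
  interior (convexHull ℝ {Line.inter L M, Line.inter L N, Line.inter M N})


private lemma caseL1 (b X α : ℝ) (hb : 0 < b) (h1 : 1 ≤ α) (h2 : b^2 ≤ α)
    (hD3 : (b*X+α)^2 ≤ α*(α-b^2)) (hE1 : (α-X)^2 ≤ α*(α-1)) : False := by
  have h3 : b*X^2 + 2*α*X + α*b ≤ 0 := by
    by_contra h
    push_neg at h
    nlinarith [mul_pos hb h]
  nlinarith [h3, hE1, hb, h1, sq_nonneg X]

private lemma caseL3 (b X α : ℝ) (hb : 0 < b) (h2 : b^2 < α) (h1 : α < 1)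
    (hD3 : (b*X+α)^2 ≤ α*(α-b^2))
    (hD4 : (b*(X-1)+(α-1))^2 ≤ (1-α)*(1+b^2-α)) : False := by
  have ha : 0 < α := lt_of_le_of_lt (sq_nonneg b) h2
  have hblt : b < 1 := by nlinarith
  have h3 : b*X^2 + 2*α*X + α*b ≤ 0 := by
    by_contra h
    push_neg at h
    nlinarith [mul_pos hb h]
  have hX : X < 0 := by
    by_contra h
    push_neg at h
    nlinarith [mul_pos ha hb, mul_nonneg (mul_nonneg hb.le h) h, mul_nonneg ha.le h]
  have h4 : b*(X-1)^2 + 2*(α-1)*(X-1) + (α-1)*b ≤ 0 := by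
    by_contra h
    push_neg at h
    nlinarith [mul_pos hb h]
  nlinarith [h4, mul_pos (show (0:ℝ) < 1-α by linarith) (show (0:ℝ) < -X by linarith),
    hb, sq_nonneg (X-1), hblt, mul_pos hb (mul_pos (show (0:ℝ) < -(X-1) by linarith) (show (0:ℝ) < -(X-1) by linarith))]

private lemma caseL4 (b X α : ℝ) (hb : 0 < b) (h1 : 1 ≤ α) (h2 : α < b^2)
    (hE1 : (α-X)^2 ≤ α*(α-1))
    (hE2 : ((α-b^2)-(X+b))^2 ≤ (b^2-α)*(1+b^2-α)) : False := by
  have ha : 0 < α := lt_of_lt_of_le one_pos h1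
  have hX : 1/2 ≤ X := by
    by_contra h
    push_neg at h
    nlinarith [mul_pos ha (show (0:ℝ) < 1-2*X by linarith), sq_nonneg X]
  nlinarith [mul_pos (show (0:ℝ) < b^2-α by linarith) (show (0:ℝ) < 2*(X+b)-1 by linarith),
    sq_nonneg (X+b)]

private lemma caseL2 (b X α : ℝ) (hb : 0 < b) (h1 : α ≤ 1) (h2 : α ≤ b^2)
    (hD4 : (b*(X-1)+(α-1))^2 ≤ (1-α)*(1+b^2-α))
    (hE2 : ((α-b^2)-(X+b))^2 ≤ (b^2-α)*(1+b^2-α)) : False := by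
  apply caseL1 b (1-b-X) (1+b^2-α) hb (by linarith) (by linarith)
  · nlinarith [hD4]
  · nlinarith [hE2]

private lemma coreNorm (b X α : ℝ) (hb : 0 < b)
    (hD3 : (b*X+α)^2 ≤ |α| * |α-b^2|)
    (hD4 : (b*(X-1)+(α-1))^2 ≤ |α-1| * |α-b^2-1|)
    (hE1 : (α-X)^2 ≤ |α| * |α-1|)
    (hE2 : ((α-b^2)-(X+b))^2 ≤ |α-b^2| * |α-b^2-1|) : False := by
  rcases le_or_gt 1 α with h1 | h1
  · rcases le_or_gt (b^2) α with h2 | h2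
    · rw [abs_of_nonneg (by linarith : (0:ℝ) ≤ α),
        abs_of_nonneg (by linarith : (0:ℝ) ≤ α - b^2)] at hD3
      rw [abs_of_nonneg (by linarith : (0:ℝ) ≤ α),
        abs_of_nonneg (by linarith : (0:ℝ) ≤ α - 1)] at hE1
      exact caseL1 b X α hb h1 h2 hD3 hE1
    · rw [abs_of_nonneg (by linarith : (0:ℝ) ≤ α),
        abs_of_nonneg (by linarith : (0:ℝ) ≤ α - 1)] at hE1
      rw [abs_of_neg (by linarith : α - b^2 < 0),
        abs_of_neg (by linarith : α - b^2 - 1 < 0)] at hE2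
      exact caseL4 b X α hb h1 h2 hE1 (by nlinarith [hE2])
  · rcases le_or_gt α (b^2) with h2 | h2
    · rw [abs_of_neg (by linarith : α - 1 < 0),
        abs_of_neg (by linarith : α - b^2 - 1 < 0)] at hD4
      rw [abs_of_nonpos (by linarith : α - b^2 ≤ 0),
        abs_of_neg (by linarith : α - b^2 - 1 < 0)] at hE2
      exact caseL2 b X α hb h1.le h2 (by nlinarith [hD4]) (by nlinarith [hE2])
    · have ha : 0 < α := lt_of_le_of_lt (sq_nonneg b) h2
      rw [abs_of_nonneg (by linarith : (0:ℝ) ≤ α),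
        abs_of_nonneg (by linarith : (0:ℝ) ≤ α - b^2)] at hD3
      rw [abs_of_neg (by linarith : α - 1 < 0),
        abs_of_neg (by nlinarith [sq_nonneg b] : α - b^2 - 1 < 0)] at hD4
      exact caseL3 b X α hb h2 h1 hD3 (by nlinarith [hD4])

private lemma coreGenAux (t1 t2 t3 t4 u1 u2 u3 u4 K : ℝ)
    (hT : (t2-t1)^2 = K* |u1-u2|)
    (hT' : (t4-t3)^2 = K* |u3-u4|)
    (hs12 : 0 < (t2-t1)/(u1-u2))
    (hs34 : (t4-t3)/(u3-u4) < 0)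
    (hflip : 0 < (t2-t1)*(t4-t3))
    (h123 : ((u1-u2)*t3+(u3-u1)*t2+(u2-u3)*t1)^2 ≤ K*(|u1-u2| * |u1-u3| * |u2-u3|))
    (h124 : ((u1-u2)*t4+(u4-u1)*t2+(u2-u4)*t1)^2 ≤ K*(|u1-u2| * |u1-u4| * |u2-u4|))
    (h134 : ((u1-u3)*t4+(u4-u1)*t3+(u3-u4)*t1)^2 ≤ K*(|u1-u3| * |u1-u4| * |u3-u4|))
    (h234 : ((u2-u3)*t4+(u4-u2)*t3+(u3-u4)*t2)^2 ≤ K*(|u2-u3| * |u2-u4| * |u3-u4|))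
    : False := by
  have h12p : 0 < (t2-t1)*(u1-u2) := by
    rcases div_pos_iff.mp hs12 with ⟨h1,h2⟩|⟨h1,h2⟩
    exacts [mul_pos h1 h2, mul_pos_of_neg_of_neg h1 h2]
  have h34p : 0 < (t4-t3)*(u4-u3) := by
    rcases div_neg_iff.mp hs34 with ⟨h1,h2⟩|⟨h1,h2⟩
    · exact mul_pos h1 (by linarith)
    · exact mul_pos_of_neg_of_neg h1 (by linarith)
  have hB : t4-t3 ≠ 0 := by
    intro h; rw [h] at h34p; simp at h34p
  have hU : u4-u3 ≠ 0 := by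
    intro h; rw [h] at h34p; simp at h34p
  set b : ℝ := (t2-t1)/(t4-t3) with hbdef
  set X : ℝ := (t1 - (t3+t4)/2)/(t4-t3) + 1/2 with hXdef
  set α : ℝ := (u1 - (u3+u4)/2)/(u4-u3) + 1/2 with hαdef
  have hb : 0 < b := div_pos_iff.mpr (mul_pos_iff.mp hflip)
  have e2 : t2 - t1 = b*(t4-t3) := by
    rw [hbdef, div_mul_cancel₀ _ hB]
  have e1 : t1 = (X - 1/2)*(t4-t3) + (t3+t4)/2 := by
    rw [hXdef]; field_simp; ring
  have e3 : u1 = (α - 1/2)*(u4-u3) + (u3+u4)/2 := by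
    rw [hαdef]; field_simp; ring
  have hu12s : 0 < (u1-u2)*(u4-u3) := by
    by_contra hcon
    push_neg at hcon
    have hA := mul_pos h12p h34p
    have hB := mul_nonpos_of_nonneg_of_nonpos hflip.le hcon
    linarith only [hA, hB]
  have hQ : (u1-u2)*(t4-t3)^2 = (t2-t1)^2*(u4-u3) := by
    rw [hT, hT']
    rcases mul_pos_iff.mp hu12s with ⟨ha,hb2⟩|⟨ha,hb2⟩
    · rw [abs_of_pos ha, abs_of_neg (show u3-u4 < 0 by linarith)]; ring
    · rw [abs_of_neg ha, abs_of_pos (show 0 < u3-u4 by linarith)]; ring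
  have h2' : (u1-u2)*(t4-t3)^2 = (b^2*(u4-u3))*(t4-t3)^2 := by
    linear_combination hQ + (u4-u3)*(t2-t1+b*(t4-t3))*e2
  have R1 : u1 - u2 = b^2*(u4-u3) := mul_right_cancel₀ (pow_ne_zero 2 hB) h2'
  have e4 : u2 = (α - b^2 - 1/2)*(u4-u3) + (u3+u4)/2 := by
    linear_combination e3 - R1
  have e2' : t2 = (X + b - 1/2)*(t4-t3) + (t3+t4)/2 := by
    linear_combination e1 + e2
  -- abs facts
  have hr12 : |u1-u2| = b^2 * |u4-u3| := by
    rw [R1, abs_mul, abs_of_nonneg (sq_nonneg b)]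
  have hu13 : u1 - u3 = α*(u4-u3) := by rw [e3]; ring
  have hu23 : u2 - u3 = (α - b^2)*(u4-u3) := by rw [e4]; ring
  have hu14 : u1 - u4 = (α-1)*(u4-u3) := by rw [e3]; ring
  have hu24 : u2 - u4 = (α-b^2-1)*(u4-u3) := by rw [e4]; ring
  have hKU : K* |u4-u3| = (t4-t3)^2 := by rw [abs_sub_comm]; exact hT'.symm
  have habs2 : |u4-u3| * |u4-u3| = (u4-u3)*(u4-u3) := abs_mul_abs_self _
  have hpos : 0 < b^2*((t4-t3)*(u4-u3))^2 := mul_pos (pow_pos hb 2) (pow_pos h34p 2)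
  have hpos' : 0 < ((t4-t3)*(u4-u3))^2 := pow_pos h34p 2
  -- D3
  have key3 : (u1-u2)*t3+(u3-u1)*t2+(u2-u3)*t1 = -((t4-t3)*(u4-u3)*b)*(b*X+α) := by
    rw [e1, e2', e3, e4]; ring
  have hD3 : (b*X+α)^2 ≤ |α| * |α-b^2| := by
    refine le_of_mul_le_mul_left ?_ hpos
    calc b^2*((t4-t3)*(u4-u3))^2 * ((b*X+α)^2)
        = ((u1-u2)*t3+(u3-u1)*t2+(u2-u3)*t1)^2 := by rw [key3]; ring
      _ ≤ K*(|u1-u2| * |u1-u3| * |u2-u3|) := h123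
      _ = b^2*((t4-t3)*(u4-u3))^2 * (|α| * |α-b^2|) := by
          rw [hr12, hu13, hu23, abs_mul, abs_mul,
            show K*(b^2* |u4-u3| * (|α| * |u4-u3|) * (|α-b^2| * |u4-u3|))
              = (K* |u4-u3|) * ((|u4-u3| * |u4-u3|) * (b^2 * (|α| * |α-b^2|))) from by ring,
            hKU, habs2]
          ring
  -- D4
  have key4 : (u1-u2)*t4+(u4-u1)*t2+(u2-u4)*t1 = -((t4-t3)*(u4-u3)*b)*(b*(X-1)+(α-1)) := by
    rw [e1, e2', e3, e4]; ring
  have hD4 : (b*(X-1)+(α-1))^2 ≤ |α-1| * |α-b^2-1| := by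
    refine le_of_mul_le_mul_left ?_ hpos
    calc b^2*((t4-t3)*(u4-u3))^2 * ((b*(X-1)+(α-1))^2)
        = ((u1-u2)*t4+(u4-u1)*t2+(u2-u4)*t1)^2 := by rw [key4]; ring
      _ ≤ K*(|u1-u2| * |u1-u4| * |u2-u4|) := h124
      _ = b^2*((t4-t3)*(u4-u3))^2 * (|α-1| * |α-b^2-1|) := by
          rw [hr12, hu14, hu24, abs_mul, abs_mul,
            show K*(b^2* |u4-u3| * (|α-1| * |u4-u3|) * (|α-b^2-1| * |u4-u3|))
              = (K* |u4-u3|) * ((|u4-u3| * |u4-u3|) * (b^2 * (|α-1| * |α-b^2-1|))) from by ring,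
            hKU, habs2]
          ring
  -- E1
  have key134 : (u1-u3)*t4+(u4-u1)*t3+(u3-u4)*t1 = ((t4-t3)*(u4-u3))*(α-X) := by
    rw [e1, e3]; ring
  have hE1 : (α-X)^2 ≤ |α| * |α-1| := by
    refine le_of_mul_le_mul_left ?_ hpos'
    calc ((t4-t3)*(u4-u3))^2 * ((α-X)^2)
        = ((u1-u3)*t4+(u4-u1)*t3+(u3-u4)*t1)^2 := by rw [key134]; ring
      _ ≤ K*(|u1-u3| * |u1-u4| * |u3-u4|) := h134
      _ = ((t4-t3)*(u4-u3))^2 * (|α| * |α-1|) := by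
          rw [hu13, hu14, abs_mul, abs_mul, abs_sub_comm u3 u4,
            show K*((|α| * |u4-u3|) * (|α-1| * |u4-u3|) * |u4-u3|)
              = (K* |u4-u3|) * ((|u4-u3| * |u4-u3|) * (|α| * |α-1|)) from by ring,
            hKU, habs2]
          ring
  -- E2
  have key234 : (u2-u3)*t4+(u4-u2)*t3+(u3-u4)*t2 = ((t4-t3)*(u4-u3))*((α-b^2)-(X+b)) := by
    rw [e2', e4]; ring
  have hE2 : ((α-b^2)-(X+b))^2 ≤ |α-b^2| * |α-b^2-1| := by
    refine le_of_mul_le_mul_left ?_ hpos'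
    calc ((t4-t3)*(u4-u3))^2 * (((α-b^2)-(X+b))^2)
        = ((u2-u3)*t4+(u4-u2)*t3+(u3-u4)*t2)^2 := by rw [key234]; ring
      _ ≤ K*(|u2-u3| * |u2-u4| * |u3-u4|) := h234
      _ = ((t4-t3)*(u4-u3))^2 * (|α-b^2| * |α-b^2-1|) := by
          rw [hu23, hu24, abs_mul, abs_mul, abs_sub_comm u3 u4,
            show K*((|α-b^2| * |u4-u3|) * (|α-b^2-1| * |u4-u3|) * |u4-u3|)
              = (K* |u4-u3|) * ((|u4-u3| * |u4-u3|) * (|α-b^2| * |α-b^2-1|)) from by ring,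
            hKU, habs2]
          ring
  exact coreNorm b X α hb hD3 hD4 hE1 hE2

private lemma coreGen (t1 t2 t3 t4 u1 u2 u3 u4 K : ℝ)
    (hT : (t2-t1)^2 = K* |u1-u2|)
    (hT' : (t4-t3)^2 = K* |u3-u4|)
    (hs12 : 0 < (t2-t1)/(u1-u2))
    (hs34 : (t4-t3)/(u3-u4) < 0)
    (h123 : ((u1-u2)*t3+(u3-u1)*t2+(u2-u3)*t1)^2 ≤ K*(|u1-u2| * |u1-u3| * |u2-u3|))
    (h124 : ((u1-u2)*t4+(u4-u1)*t2+(u2-u4)*t1)^2 ≤ K*(|u1-u2| * |u1-u4| * |u2-u4|))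
    (h134 : ((u1-u3)*t4+(u4-u1)*t3+(u3-u4)*t1)^2 ≤ K*(|u1-u3| * |u1-u4| * |u3-u4|))
    (h234 : ((u2-u3)*t4+(u4-u2)*t3+(u3-u4)*t2)^2 ≤ K*(|u2-u3| * |u2-u4| * |u3-u4|))
    : False := by
  have ht21 : t2 - t1 ≠ 0 := by
    intro h; rw [h] at hs12; simp at hs12
  have ht43 : t4 - t3 ≠ 0 := by
    intro h; rw [h] at hs34; simp at hs34
  rcases lt_trichotomy ((t2-t1)*(t4-t3)) 0 with h | h | h
  · refine coreGenAux (-t1) (-t2) (-t4) (-t3) (-u1) (-u2) (-u4) (-u3) K ?_ ?_ ?_ ?_ ?_ ?_ ?_ ?_ ?_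
    · rw [show (-t2)-(-t1) = -(t2-t1) from by ring, show (-u1)-(-u2) = -(u1-u2) from by ring,
        neg_sq, abs_neg]
      exact hT
    · rw [show (-t3)-(-t4) = (t4-t3) from by ring, show (-u4)-(-u3) = u3-u4 from by ring]
      exact hT'
    · rw [show (-t2)-(-t1) = -(t2-t1) from by ring, show (-u1)-(-u2) = -(u1-u2) from by ring,
        neg_div_neg_eq]
      exact hs12
    · rw [show (-t3)-(-t4) = (t4-t3) from by ring, show (-u4)-(-u3) = u3-u4 from by ring]
      exact hs34
    · nlinarith [h]
    · have e : (((-u1)-(-u2))*(-t4)+((-u4)-(-u1))*(-t2)+((-u2)-(-u4))*(-t1))^2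
          = ((u1-u2)*t4+(u4-u1)*t2+(u2-u4)*t1)^2 := by ring
      rw [e, show (-u1)-(-u2) = -(u1-u2) from by ring, show (-u1)-(-u4) = -(u1-u4) from by ring,
        show (-u2)-(-u4) = -(u2-u4) from by ring, abs_neg, abs_neg, abs_neg]
      linarith [h124]
    · have e : (((-u1)-(-u2))*(-t3)+((-u3)-(-u1))*(-t2)+((-u2)-(-u3))*(-t1))^2
          = ((u1-u2)*t3+(u3-u1)*t2+(u2-u3)*t1)^2 := by ring
      rw [e, show (-u1)-(-u2) = -(u1-u2) from by ring, show (-u1)-(-u3) = -(u1-u3) from by ring,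
        show (-u2)-(-u3) = -(u2-u3) from by ring, abs_neg, abs_neg, abs_neg]
      linarith [h123]
    · have e : (((-u1)-(-u4))*(-t3)+((-u3)-(-u1))*(-t4)+((-u4)-(-u3))*(-t1))^2
          = ((u1-u3)*t4+(u4-u1)*t3+(u3-u4)*t1)^2 := by ring
      rw [e, show (-u1)-(-u4) = -(u1-u4) from by ring, show (-u1)-(-u3) = -(u1-u3) from by ring,
        show (-u4)-(-u3) = u3-u4 from by ring, abs_neg, abs_neg]
      linarith [h134]
    · have e : (((-u2)-(-u4))*(-t3)+((-u3)-(-u2))*(-t4)+((-u4)-(-u3))*(-t2))^2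
          = ((u2-u3)*t4+(u4-u2)*t3+(u3-u4)*t2)^2 := by ring
      rw [e, show (-u2)-(-u4) = -(u2-u4) from by ring, show (-u2)-(-u3) = -(u2-u3) from by ring,
        show (-u4)-(-u3) = u3-u4 from by ring, abs_neg, abs_neg]
      linarith [h234]
  · exact mul_ne_zero ht21 ht43 h
  · exact coreGenAux t1 t2 t3 t4 u1 u2 u3 u4 K hT hT' hs12 hs34 h h123 h124 h134 h234

-- auxiliary definitions
noncomputable def tpar (L₀ M : Line) : ℝ :=
  (L₀.c*(L₀.a*M.a + L₀.b*M.b) - M.c*(L₀.a^2+L₀.b^2)) / Line.lineDet L₀ M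
noncomputable def upar (L₀ M : Line) : ℝ :=
  (L₀.a*M.a + L₀.b*M.b) / Line.lineDet L₀ M
noncomputable def fsgn (L₀ : Line) (p : ℝ × ℝ) : ℝ := L₀.a * p.1 + L₀.b * p.2 - L₀.c
def lin3det (L M N : Line) : ℝ :=
  L.a*(M.b*N.c - N.b*M.c) - L.b*(M.a*N.c - N.a*M.c) + L.c*(M.a*N.b - N.a*M.b)

lemma s_pos (L₀ : Line) : 0 < L₀.a^2 + L₀.b^2 := by
  rcases lt_trichotomy (L₀.a^2 + L₀.b^2) 0 with h | h | h
  · nlinarith [sq_nonneg L₀.a, sq_nonneg L₀.b]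
  · exfalso
    apply L₀.hab
    have ha : L₀.a = 0 := by
      have h1 : L₀.a^2 = 0 := by nlinarith [sq_nonneg L₀.a, sq_nonneg L₀.b]
      exact pow_eq_zero_iff (n := 2) (by norm_num) |>.mp h1
    have hb : L₀.b = 0 := by
      have h1 : L₀.b^2 = 0 := by nlinarith [sq_nonneg L₀.a, sq_nonneg L₀.b]
      exact pow_eq_zero_iff (n := 2) (by norm_num) |>.mp h1
    rw [ha, hb]
  · exact h

lemma upar_sub_mul (L₀ M N : Line) (hM : Line.lineDet L₀ M ≠ 0) (hN : Line.lineDet L₀ N ≠ 0) :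
    (upar L₀ M - upar L₀ N) * (Line.lineDet L₀ M * Line.lineDet L₀ N)
      = (L₀.a^2+L₀.b^2) * Line.lineDet M N := by
  unfold upar at *
  field_simp
  unfold Line.lineDet
  ring

lemma upar_ne (L₀ M N : Line) (hM : Line.lineDet L₀ M ≠ 0) (hN : Line.lineDet L₀ N ≠ 0)
    (hMN : Line.lineDet M N ≠ 0) : upar L₀ M - upar L₀ N ≠ 0 := by
  intro h
  have h2 := upar_sub_mul L₀ M N hM hN
  rw [h, zero_mul] at h2
  rcases mul_eq_zero.mp h2.symm with h3 | h3
  · exact absurd h3 (ne_of_gt (s_pos L₀))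
  · exact hMN h3

lemma fsgn_inter (L₀ M N : Line) (hM : Line.lineDet L₀ M ≠ 0) (hN : Line.lineDet L₀ N ≠ 0)
    (hMN : Line.lineDet M N ≠ 0) :
    fsgn L₀ (Line.inter M N) = (tpar L₀ N - tpar L₀ M) / (upar L₀ M - upar L₀ N) := by
  rw [eq_div_iff (upar_ne L₀ M N hM hN hMN)]
  unfold fsgn tpar upar Line.inter at *
  field_simp
  unfold Line.lineDet
  ring

lemma tpar_sub_mul (L₀ M N : Line) (hM : Line.lineDet L₀ M ≠ 0) (hN : Line.lineDet L₀ N ≠ 0) :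
    (tpar L₀ N - tpar L₀ M) * (Line.lineDet L₀ M * Line.lineDet L₀ N)
      = -((L₀.a^2+L₀.b^2) * lin3det L₀ M N) := by
  unfold tpar lin3det at *
  field_simp
  unfold Line.lineDet
  ring

lemma concur_iff (M N P : Line) (hMN : Line.lineDet M N ≠ 0) :
    Line.inter M N ∈ P.pts ↔ lin3det M N P = 0 := by
  have key : (P.a * (Line.inter M N).1 + P.b * (Line.inter M N).2 - P.c) * Line.lineDet M N
      = -(lin3det M N P) := by
    unfold lin3det Line.inter at *
    field_simp
    unfold Line.lineDet
    ring
  constructor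
  · intro h
    have hmem : P.a * (Line.inter M N).1 + P.b * (Line.inter M N).2 = P.c := h
    have : (0:ℝ) * Line.lineDet M N = -(lin3det M N P) := by rw [← key, hmem]; ring_nf
    simp at this
    linarith [this]
  · intro h
    rw [h] at key
    have h2 : P.a * (Line.inter M N).1 + P.b * (Line.inter M N).2 - P.c = 0 := by
      rcases mul_eq_zero.mp (by rw [key]; ring : (P.a * (Line.inter M N).1 + P.b * (Line.inter M N).2 - P.c) * Line.lineDet M N = 0) with h3 | h3
      · exact h3
      · exact absurd h3 hMN
    show P.a * (Line.inter M N).1 + P.b * (Line.inter M N).2 = P.c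
    linarith [h2]

lemma ndet_mul (L₀ M N P : Line) (hM : Line.lineDet L₀ M ≠ 0) (hN : Line.lineDet L₀ N ≠ 0)
    (hP : Line.lineDet L₀ P ≠ 0) :
    ((upar L₀ M - upar L₀ N)*(tpar L₀ P) + (upar L₀ P - upar L₀ M)*(tpar L₀ N)
      + (upar L₀ N - upar L₀ P)*(tpar L₀ M))
      * (Line.lineDet L₀ M * Line.lineDet L₀ N * Line.lineDet L₀ P)
    = -((L₀.a^2+L₀.b^2)^2 * lin3det M N P) := by
  unfold tpar upar lin3det at *
  field_simp
  unfold Line.lineDet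
  ring

lemma area_base (L₀ M N : Line) (hM : Line.lineDet L₀ M ≠ 0) (hN : Line.lineDet L₀ N ≠ 0)
    (hMN : Line.lineDet M N ≠ 0) :
    triArea L₀ M N * (2*(L₀.a^2+L₀.b^2) * |upar L₀ M - upar L₀ N|)
      = (tpar L₀ N - tpar L₀ M)^2 := by
  have hs := s_pos L₀
  have key : ((Line.inter L₀ N).1 - (Line.inter L₀ M).1) * ((Line.inter M N).2 - (Line.inter L₀ M).2)
      - ((Line.inter M N).1 - (Line.inter L₀ M).1) * ((Line.inter L₀ N).2 - (Line.inter L₀ M).2)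
      = ((tpar L₀ N - tpar L₀ M)^2) / ((upar L₀ M - upar L₀ N) * (L₀.a^2+L₀.b^2)) := by
    rw [eq_div_iff (mul_ne_zero (upar_ne L₀ M N hM hN hMN) (ne_of_gt hs))]
    unfold tpar upar Line.inter at *
    field_simp
    unfold Line.lineDet
    ring
  show triangleArea (Line.inter L₀ M) (Line.inter L₀ N) (Line.inter M N) * _ = _
  unfold triangleArea
  rw [key]
  rw [abs_div, abs_mul (upar L₀ M - upar L₀ N), abs_of_pos hs, abs_of_nonneg (sq_nonneg (tpar L₀ N - tpar L₀ M))]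
  have hA : |upar L₀ M - upar L₀ N| ≠ 0 := abs_ne_zero.mpr (upar_ne L₀ M N hM hN hMN)
  field_simp

set_option maxHeartbeats 1000000 in
lemma tri_raw (M N P : Line) (hMN : Line.lineDet M N ≠ 0) (hMP : Line.lineDet M P ≠ 0)
    (hNP : Line.lineDet N P ≠ 0) :
    (((Line.inter M P).1 - (Line.inter M N).1) * ((Line.inter N P).2 - (Line.inter M N).2)
      - ((Line.inter N P).1 - (Line.inter M N).1) * ((Line.inter M P).2 - (Line.inter M N).2))
      * (Line.lineDet M N * Line.lineDet M P * Line.lineDet N P) = (lin3det M N P)^2 := by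
  unfold lin3det Line.inter at *
  field_simp
  unfold Line.lineDet
  ring

set_option maxHeartbeats 1000000 in
lemma area_free (L₀ M N P : Line) (hM : Line.lineDet L₀ M ≠ 0) (hN : Line.lineDet L₀ N ≠ 0)
    (hP : Line.lineDet L₀ P ≠ 0) (hMN : Line.lineDet M N ≠ 0) (hMP : Line.lineDet M P ≠ 0)
    (hNP : Line.lineDet N P ≠ 0) :
    triArea M N P * (2*(L₀.a^2+L₀.b^2) *
      (|upar L₀ M - upar L₀ N| * |upar L₀ M - upar L₀ P| * |upar L₀ N - upar L₀ P|))
      = ((upar L₀ M - upar L₀ N)*(tpar L₀ P) + (upar L₀ P - upar L₀ M)*(tpar L₀ N)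
          + (upar L₀ N - upar L₀ P)*(tpar L₀ M))^2 := by
  have hs := s_pos L₀
  have hraw := tri_raw M N P hMN hMP hNP
  have hnd := ndet_mul L₀ M N P hM hN hP
  have e1 := upar_sub_mul L₀ M N hM hN
  have e2 := upar_sub_mul L₀ M P hM hP
  have e3 := upar_sub_mul L₀ N P hN hP
  have hDne : (Line.lineDet L₀ M * Line.lineDet L₀ N * Line.lineDet L₀ P)^2 ≠ 0 :=
    pow_ne_zero 2 (mul_ne_zero (mul_ne_zero hM hN) hP)
  apply mul_right_cancel₀ hDne
  have hD2 : (Line.lineDet L₀ M * Line.lineDet L₀ N * Line.lineDet L₀ P)^2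
      = |Line.lineDet L₀ M * Line.lineDet L₀ N| * |Line.lineDet L₀ M * Line.lineDet L₀ P|
        * |Line.lineDet L₀ N * Line.lineDet L₀ P| := by
    rw [← abs_mul, ← abs_mul,
      show Line.lineDet L₀ M * Line.lineDet L₀ N * (Line.lineDet L₀ M * Line.lineDet L₀ P)
          * (Line.lineDet L₀ N * Line.lineDet L₀ P)
        = (Line.lineDet L₀ M * Line.lineDet L₀ N * Line.lineDet L₀ P)^2 from by ring,
      abs_of_nonneg (sq_nonneg _)]
  have c1 : |upar L₀ M - upar L₀ N| * |Line.lineDet L₀ M * Line.lineDet L₀ N|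
      = (L₀.a^2+L₀.b^2) * |Line.lineDet M N| := by
    rw [← abs_mul, e1, abs_mul, abs_of_pos hs]
  have c2 : |upar L₀ M - upar L₀ P| * |Line.lineDet L₀ M * Line.lineDet L₀ P|
      = (L₀.a^2+L₀.b^2) * |Line.lineDet M P| := by
    rw [← abs_mul, e2, abs_mul, abs_of_pos hs]
  have c3 : |upar L₀ N - upar L₀ P| * |Line.lineDet L₀ N * Line.lineDet L₀ P|
      = (L₀.a^2+L₀.b^2) * |Line.lineDet N P| := by
    rw [← abs_mul, e3, abs_mul, abs_of_pos hs]
  calc triArea M N P * (2*(L₀.a^2+L₀.b^2) *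
      (|upar L₀ M - upar L₀ N| * |upar L₀ M - upar L₀ P| * |upar L₀ N - upar L₀ P|))
      * (Line.lineDet L₀ M * Line.lineDet L₀ N * Line.lineDet L₀ P)^2
      = |((Line.inter M P).1 - (Line.inter M N).1) * ((Line.inter N P).2 - (Line.inter M N).2)
      - ((Line.inter N P).1 - (Line.inter M N).1) * ((Line.inter M P).2 - (Line.inter M N).2)|
        * ((L₀.a^2+L₀.b^2) *
          ((|upar L₀ M - upar L₀ N| * |Line.lineDet L₀ M * Line.lineDet L₀ N|)
            * (|upar L₀ M - upar L₀ P| * |Line.lineDet L₀ M * Line.lineDet L₀ P|)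
            * (|upar L₀ N - upar L₀ P| * |Line.lineDet L₀ N * Line.lineDet L₀ P|))) := by
        rw [hD2]
        show |_| / 2 * _ * _ = _
        ring
    _ = |((Line.inter M P).1 - (Line.inter M N).1) * ((Line.inter N P).2 - (Line.inter M N).2)
      - ((Line.inter N P).1 - (Line.inter M N).1) * ((Line.inter M P).2 - (Line.inter M N).2)|
        * (|Line.lineDet M N| * |Line.lineDet M P| * |Line.lineDet N P|) * (L₀.a^2+L₀.b^2)^4 := by
        rw [c1, c2, c3]; ring
    _ = |(((Line.inter M P).1 - (Line.inter M N).1) * ((Line.inter N P).2 - (Line.inter M N).2)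
      - ((Line.inter N P).1 - (Line.inter M N).1) * ((Line.inter M P).2 - (Line.inter M N).2))
        * (Line.lineDet M N * Line.lineDet M P * Line.lineDet N P)| * (L₀.a^2+L₀.b^2)^4 := by
        rw [abs_mul, abs_mul, abs_mul]
    _ = (lin3det M N P)^2 * (L₀.a^2+L₀.b^2)^4 := by
        rw [hraw, abs_of_nonneg (sq_nonneg _)]
    _ = ((upar L₀ M - upar L₀ N)*(tpar L₀ P) + (upar L₀ P - upar L₀ M)*(tpar L₀ N)
          + (upar L₀ N - upar L₀ P)*(tpar L₀ M))^2
        * (Line.lineDet L₀ M * Line.lineDet L₀ N * Line.lineDet L₀ P)^2 := by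
        have : (((upar L₀ M - upar L₀ N)*(tpar L₀ P) + (upar L₀ P - upar L₀ M)*(tpar L₀ N)
          + (upar L₀ N - upar L₀ P)*(tpar L₀ M))
            * (Line.lineDet L₀ M * Line.lineDet L₀ N * Line.lineDet L₀ P))^2
            = (-((L₀.a^2+L₀.b^2)^2 * lin3det M N P))^2 := by rw [hnd]
        nlinarith [this]


private lemma mainContra {n : ℕ} (L : Fin n → Line)
    (hpar : ∀ i j, i ≠ j → ¬ Line.Parallel (L i) (L j))
    (i₁ : Fin n) (A : ℝ)
    (hmaxA : ∀ a b c : Fin n, FormsTriangle (L a) (L b) (L c) → triArea (L a) (L b) (L c) ≤ A)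
    (p1 p2 p3 p4 : Fin n)
    (h12 : FormsTriangle (L i₁) (L p1) (L p2))
    (h34 : FormsTriangle (L i₁) (L p3) (L p4))
    (a12 : triArea (L i₁) (L p1) (L p2) = A)
    (a34 : triArea (L i₁) (L p3) (L p4) = A)
    (s12 : 0 < fsgn (L i₁) (Line.inter (L p1) (L p2)))
    (s34 : fsgn (L i₁) (Line.inter (L p3) (L p4)) < 0) : False := by
  have d01 : Line.lineDet (L i₁) (L p1) ≠ 0 := h12.1
  have d02 : Line.lineDet (L i₁) (L p2) ≠ 0 := h12.2.1
  have d12 : Line.lineDet (L p1) (L p2) ≠ 0 := h12.2.2.1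
  have d03 : Line.lineDet (L i₁) (L p3) ≠ 0 := h34.1
  have d04 : Line.lineDet (L i₁) (L p4) ≠ 0 := h34.2.1
  have d34 : Line.lineDet (L p3) (L p4) ≠ 0 := h34.2.2.1
  have hs := s_pos (L i₁)
  have hsg12 : 0 < (tpar (L i₁) (L p2) - tpar (L i₁) (L p1)) /
      (upar (L i₁) (L p1) - upar (L i₁) (L p2)) := by
    rw [← fsgn_inter (L i₁) (L p1) (L p2) d01 d02 d12]; exact s12
  have hsg34 : (tpar (L i₁) (L p4) - tpar (L i₁) (L p3)) /
      (upar (L i₁) (L p3) - upar (L i₁) (L p4)) < 0 := by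
    rw [← fsgn_inter (L i₁) (L p3) (L p4) d03 d04 d34]; exact s34
  have ht12 : tpar (L i₁) (L p2) - tpar (L i₁) (L p1) ≠ 0 := by
    intro h; rw [h] at hsg12; simp at hsg12
  have hF12 := area_base (L i₁) (L p1) (L p2) d01 d02 d12
  rw [a12] at hF12
  have habs12 : 0 < |upar (L i₁) (L p1) - upar (L i₁) (L p2)| :=
    abs_pos.mpr (upar_ne _ _ _ d01 d02 d12)
  have hApos : 0 < A := by
    by_contra hc
    push_neg at hc
    have h2 : (0:ℝ) < 2*((L i₁).a^2+(L i₁).b^2)*|upar (L i₁) (L p1) - upar (L i₁) (L p2)| := by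
      positivity
    have h1 : 0 < (tpar (L i₁) (L p2) - tpar (L i₁) (L p1))^2 := by positivity
    nlinarith [mul_nonneg (neg_nonneg.mpr hc) h2.le, hF12, h1]
  have hF34 := area_base (L i₁) (L p3) (L p4) d03 d04 d34
  rw [a34] at hF34
  have hKpos : 0 < 2*((L i₁).a^2+(L i₁).b^2)*A := by positivity
  have trip : ∀ q r w : Fin n,
      Line.lineDet (L i₁) (L q) ≠ 0 → Line.lineDet (L i₁) (L r) ≠ 0 →
      Line.lineDet (L i₁) (L w) ≠ 0 →
      ((upar (L i₁) (L q) - upar (L i₁) (L r))*(tpar (L i₁) (L w))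
        + (upar (L i₁) (L w) - upar (L i₁) (L q))*(tpar (L i₁) (L r))
        + (upar (L i₁) (L r) - upar (L i₁) (L w))*(tpar (L i₁) (L q)))^2
      ≤ (2*((L i₁).a^2+(L i₁).b^2)*A) * (|upar (L i₁) (L q) - upar (L i₁) (L r)|
          * |upar (L i₁) (L q) - upar (L i₁) (L w)|
          * |upar (L i₁) (L r) - upar (L i₁) (L w)|) := by
    intro q r w hq hr hw
    have hRnn : 0 ≤ (2*((L i₁).a^2+(L i₁).b^2)*A) * (|upar (L i₁) (L q) - upar (L i₁) (L r)|
          * |upar (L i₁) (L q) - upar (L i₁) (L w)|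
          * |upar (L i₁) (L r) - upar (L i₁) (L w)|) :=
      mul_nonneg hKpos.le (by positivity)
    by_cases hqr : q = r
    · subst hqr; nlinarith [hRnn]
    by_cases hqw : q = w
    · subst hqw; nlinarith [hRnn]
    by_cases hrw : r = w
    · subst hrw; nlinarith [hRnn]
    have dqr : Line.lineDet (L q) (L r) ≠ 0 := hpar q r hqr
    have dqw : Line.lineDet (L q) (L w) ≠ 0 := hpar q w hqw
    have drw : Line.lineDet (L r) (L w) ≠ 0 := hpar r w hrw
    by_cases hconc : lin3det (L q) (L r) (L w) = 0
    · have h2 := ndet_mul (L i₁) (L q) (L r) (L w) hq hr hw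
      rw [hconc] at h2
      have h3 : ((upar (L i₁) (L q) - upar (L i₁) (L r))*(tpar (L i₁) (L w))
        + (upar (L i₁) (L w) - upar (L i₁) (L q))*(tpar (L i₁) (L r))
        + (upar (L i₁) (L r) - upar (L i₁) (L w))*(tpar (L i₁) (L q)))
          * (Line.lineDet (L i₁) (L q) * Line.lineDet (L i₁) (L r) * Line.lineDet (L i₁) (L w))
          = 0 := by rw [h2]; ring
      have h4 := (mul_eq_zero.mp h3).resolve_right
        (mul_ne_zero (mul_ne_zero hq hr) hw)
      rw [h4]
      nlinarith [hRnn]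
    · have hFT : FormsTriangle (L q) (L r) (L w) :=
        ⟨hpar q r hqr, hpar q w hqw, hpar r w hrw,
          fun hmem => hconc ((concur_iff (L q) (L r) (L w) dqr).mp hmem)⟩
      have harea := hmaxA q r w hFT
      have hf3 := area_free (L i₁) (L q) (L r) (L w) hq hr hw dqr dqw drw
      calc ((upar (L i₁) (L q) - upar (L i₁) (L r))*(tpar (L i₁) (L w))
        + (upar (L i₁) (L w) - upar (L i₁) (L q))*(tpar (L i₁) (L r))
        + (upar (L i₁) (L r) - upar (L i₁) (L w))*(tpar (L i₁) (L q)))^2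
          = triArea (L q) (L r) (L w) * (2*((L i₁).a^2+(L i₁).b^2) *
            (|upar (L i₁) (L q) - upar (L i₁) (L r)| * |upar (L i₁) (L q) - upar (L i₁) (L w)|
              * |upar (L i₁) (L r) - upar (L i₁) (L w)|)) := hf3.symm
        _ ≤ A * (2*((L i₁).a^2+(L i₁).b^2) *
            (|upar (L i₁) (L q) - upar (L i₁) (L r)| * |upar (L i₁) (L q) - upar (L i₁) (L w)|
              * |upar (L i₁) (L r) - upar (L i₁) (L w)|)) := by
            apply mul_le_mul_of_nonneg_right harea
            positivity
        _ = (2*((L i₁).a^2+(L i₁).b^2)*A) * (|upar (L i₁) (L q) - upar (L i₁) (L r)|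
          * |upar (L i₁) (L q) - upar (L i₁) (L w)|
          * |upar (L i₁) (L r) - upar (L i₁) (L w)|) := by ring
  exact coreGen (tpar (L i₁) (L p1)) (tpar (L i₁) (L p2)) (tpar (L i₁) (L p3)) (tpar (L i₁) (L p4))
    (upar (L i₁) (L p1)) (upar (L i₁) (L p2)) (upar (L i₁) (L p3)) (upar (L i₁) (L p4))
    (2*((L i₁).a^2+(L i₁).b^2)*A)
    (by linarith [hF12]) (by linarith [hF34]) hsg12 hsg34
    (trip p1 p2 p3 d01 d02 d03) (trip p1 p2 p4 d01 d02 d04)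
    (trip p1 p3 p4 d01 d03 d04) (trip p2 p3 p4 d02 d03 d04)

/-- Suppose an arrangement of `n` lines contains no two parallel lines, and the
triangle formed by the lines `i₁, i₂, i₃` has maximum area among all triangles
of the arrangement.  Then all maximum-area triangles supported by the line
`ℓ₁ = L i₁` lie on the same closed side of `ℓ₁`: there is a sign `σ ∈ {1, -1}`
such that for every maximum-area triangle formed by `ℓ₁` and two further lines
`j, k`, its third vertex (the intersection of `L j` and `L k`) lies in the
closed half-plane `{p : σ·(a·p₁ + b·p₂ - c) ≥ 0}` determined by `ℓ₁`. -/
theorem stmt16 (n : ℕ) (L : Fin n → Line) (hinj : Function.Injective L)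
    (hpar : ∀ i j, i ≠ j → ¬ Line.Parallel (L i) (L j))
    (i₁ i₂ i₃ : Fin n) (hT : FormsTriangle (L i₁) (L i₂) (L i₃))
    (hmax : ∀ a b c : Fin n, FormsTriangle (L a) (L b) (L c) →
      triArea (L a) (L b) (L c) ≤ triArea (L i₁) (L i₂) (L i₃)) :
    ∃ σ : ℝ, (σ = 1 ∨ σ = -1) ∧
      ∀ j k : Fin n, FormsTriangle (L i₁) (L j) (L k) →
        triArea (L i₁) (L j) (L k) = triArea (L i₁) (L i₂) (L i₃) →
        0 ≤ σ * ((L i₁).a * (Line.inter (L j) (L k)).1 +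
          (L i₁).b * (Line.inter (L j) (L k)).2 - (L i₁).c) := by
  have d01 : Line.lineDet (L i₁) (L i₂) ≠ 0 := hT.1
  have d02 : Line.lineDet (L i₁) (L i₃) ≠ 0 := hT.2.1
  have d12 : Line.lineDet (L i₂) (L i₃) ≠ 0 := hT.2.2.1
  have hlin : lin3det (L i₁) (L i₂) (L i₃) ≠ 0 :=
    fun hl => hT.2.2.2 ((concur_iff _ _ _ d01).mpr hl)
  have hne : fsgn (L i₁) (Line.inter (L i₂) (L i₃)) ≠ 0 := by
    rw [fsgn_inter (L i₁) (L i₂) (L i₃) d01 d02 d12]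
    intro h0
    have hu := upar_ne (L i₁) (L i₂) (L i₃) d01 d02 d12
    have ht0 : tpar (L i₁) (L i₃) - tpar (L i₁) (L i₂) = 0 := by
      rcases div_eq_zero_iff.mp h0 with h | h
      · exact h
      · exact absurd h hu
    have hts := tpar_sub_mul (L i₁) (L i₂) (L i₃) d01 d02
    rw [ht0, zero_mul] at hts
    have h2 : ((L i₁).a^2+(L i₁).b^2) * lin3det (L i₁) (L i₂) (L i₃) = 0 := by linarith [hts]
    rcases mul_eq_zero.mp h2 with h3 | h3
    · exact absurd h3 (ne_of_gt (s_pos (L i₁)))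
    · exact hlin h3
  refine ⟨if 0 < fsgn (L i₁) (Line.inter (L i₂) (L i₃)) then 1 else -1,
    by split <;> simp, ?_⟩
  intro j k hjk harea
  by_contra hneg
  push_neg at hneg
  by_cases hsgn : 0 < fsgn (L i₁) (Line.inter (L i₂) (L i₃))
  · rw [if_pos hsgn, one_mul] at hneg
    exact mainContra L hpar i₁ (triArea (L i₁) (L i₂) (L i₃)) hmax i₂ i₃ j k
      hT hjk rfl harea hsgn hneg
  · rw [if_neg hsgn] at hneg
    have hpos' : 0 < fsgn (L i₁) (Line.inter (L j) (L k)) := by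
      simp only [fsgn]; nlinarith [hneg]
    have hneg' : fsgn (L i₁) (Line.inter (L i₂) (L i₃)) < 0 :=
      lt_of_le_of_ne (not_lt.mp hsgn) hne
    exact mainContra L hpar i₁ (triArea (L i₁) (L i₂) (L i₃)) hmax j k i₂ i₃
      hjk hT harea rfl hpos' hneg'
end

section
/- For every arrangement of n ≥ 3 lines in the plane, the number of minimum-area triangles is at most the number of triangular faces of the arrangement, and hence (by the Bader–Clément bound on Kobon triangles) at most ⌊n(n-2)/3⌋. -/
open scoped Classical

namespace Aux

/-- Affine evaluation of a line's functional at a point. -/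
noncomputable def ev (K : Line) (q : ℝ × ℝ) : ℝ := K.a * q.1 + K.b * q.2 - K.c

lemma mem_pts_iff (K : Line) (q : ℝ × ℝ) : q ∈ K.pts ↔ ev K q = 0 := by
  simp [Line.pts, ev, sub_eq_zero]

lemma normsq_pos (K : Line) : 0 < K.a ^ 2 + K.b ^ 2 := by
  rcases eq_or_ne K.a 0 with h | h
  · have hb : K.b ≠ 0 := by
      intro hb; exact K.hab (by rw [h, hb])
    positivity
  · positivity

/-- Key planar identity. -/
lemma key_id (u1 u2 d1 d2 e1 e2 : ℝ) :
    (u1 * e1 + u2 * e2) * (d1 ^ 2 + d2 ^ 2) =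
      (e1 * d1 + e2 * d2) * (u1 * d1 + u2 * d2)
        + (d1 * e2 - d2 * e1) * (u2 * d1 - u1 * d2) := by ring

lemma inter_mem_left {L M : Line} (h : ¬ L.Parallel M) : Line.inter L M ∈ L.pts := by
  have hd : Line.lineDet L M ≠ 0 := h
  simp only [Line.pts, Line.inter, Set.mem_setOf_eq]
  simp only [Line.lineDet] at hd ⊢
  field_simp
  ring

lemma inter_mem_right {L M : Line} (h : ¬ L.Parallel M) : Line.inter L M ∈ M.pts := by
  have hd : Line.lineDet L M ≠ 0 := h
  simp only [Line.pts, Line.inter, Set.mem_setOf_eq]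
  simp only [Line.lineDet] at hd ⊢
  rw [mul_div_assoc', mul_div_assoc', ← add_div, div_eq_iff hd]
  ring

lemma inter_unique {L M : Line} (h : ¬ L.Parallel M) {p : ℝ × ℝ}
    (h1 : p ∈ L.pts) (h2 : p ∈ M.pts) : p = Line.inter L M := by
  have hd : Line.lineDet L M ≠ 0 := h
  simp only [Line.pts, Set.mem_setOf_eq] at h1 h2
  have e1 : p.1 * Line.lineDet L M = L.c * M.b - M.c * L.b := by
    simp only [Line.lineDet]; linear_combination M.b * h1 - L.b * h2
  have e2 : p.2 * Line.lineDet L M = L.a * M.c - M.a * L.c := by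
    simp only [Line.lineDet]; linear_combination L.a * h2 - M.a * h1
  have : p = (p.1, p.2) := rfl
  rw [this, Line.inter, Prod.mk.injEq]
  constructor
  · field_simp; linarith [e1]
  · field_simp; linarith [e2]

/-- If `K` is parallel to `X`, then `ev K` is constant on `X.pts`. -/
lemma parallel_ev_const {K X : Line} (h : K.Parallel X) {q r : ℝ × ℝ}
    (hq : q ∈ X.pts) (hr : r ∈ X.pts) : ev K q = ev K r := by
  simp only [Line.pts, Set.mem_setOf_eq] at hq hr
  have hpar : K.a * X.b - K.b * X.a = 0 := h
  have hXd : (q.1 - r.1) * X.a + (q.2 - r.2) * X.b = 0 := by linarith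
  have h2 : K.b * X.a - K.a * X.b = 0 := by linarith
  have hid := key_id K.a K.b X.a X.b (q.1 - r.1) (q.2 - r.2)
  rw [hXd, h2, zero_mul, mul_zero, add_zero] at hid
  have hx2 : (0:ℝ) < X.a ^ 2 + X.b ^ 2 := normsq_pos X
  have : K.a * (q.1 - r.1) + K.b * (q.2 - r.2) = 0 := by
    rcases mul_eq_zero.mp hid with h | h
    · exact h
    · exact absurd h (ne_of_gt hx2)
  simp only [ev]; linarith

end Aux
namespace Aux

lemma triangleArea_rot (p q r : ℝ × ℝ) : triangleArea p q r = triangleArea r p q := by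
  unfold triangleArea
  congr 1
  have : (q.1 - p.1) * (r.2 - p.2) - (r.1 - p.1) * (q.2 - p.2) =
      (p.1 - r.1) * (q.2 - r.2) - (q.1 - r.1) * (p.2 - r.2) := by ring
  rw [this]

lemma triangleArea_swap (p q r : ℝ × ℝ) : triangleArea p q r = triangleArea q p r := by
  unfold triangleArea
  rw [show (q.1 - p.1) * (r.2 - p.2) - (r.1 - p.1) * (q.2 - p.2) =
      -((p.1 - q.1) * (r.2 - q.2) - (r.1 - q.1) * (p.2 - q.2)) by ring, abs_neg]

/-- If `V, W₁` lie on `X`, are distinct, and `W₂` is off `X`, the triangle has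
positive area. -/
lemma area_pos {X : Line} {V W₁ W₂ : ℝ × ℝ} (hV : V ∈ X.pts) (hW₁ : W₁ ∈ X.pts)
    (hne : V ≠ W₁) (hW₂ : W₂ ∉ X.pts) : 0 < triangleArea V W₁ W₂ := by
  simp only [Line.pts, Set.mem_setOf_eq] at hV hW₁ hW₂
  have hD : (W₁.1 - V.1) * (W₂.2 - V.2) - (W₂.1 - V.1) * (W₁.2 - V.2) ≠ 0 := by
    intro hD
    have hXd : (W₂.1 - V.1) * (W₁.1 - V.1) + (W₂.2 - V.2) * (W₁.2 - V.2) =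
        (W₂.1 - V.1) * (W₁.1 - V.1) + (W₂.2 - V.2) * (W₁.2 - V.2) := rfl
    have hud : X.a * (W₁.1 - V.1) + X.b * (W₁.2 - V.2) = 0 := by linarith
    have hdet : (W₁.1 - V.1) * (W₂.2 - V.2) - (W₁.2 - V.2) * (W₂.1 - V.1) = 0 := by
      linarith
    have hid := key_id X.a X.b (W₁.1 - V.1) (W₁.2 - V.2) (W₂.1 - V.1) (W₂.2 - V.2)
    rw [hud, hdet, mul_zero, zero_mul, add_zero] at hid
    have hd2 : (0:ℝ) < (W₁.1 - V.1) ^ 2 + (W₁.2 - V.2) ^ 2 := by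
      rcases eq_or_ne (W₁.1 - V.1) 0 with h1 | h1
      · have h2 : W₁.2 - V.2 ≠ 0 := by
          intro h2
          apply hne
          have : V.1 = W₁.1 := by linarith
          have : V.2 = W₁.2 := by linarith
          exact Prod.ext (by linarith) (by linarith)
        positivity
      · positivity
    have h0 : X.a * (W₂.1 - V.1) + X.b * (W₂.2 - V.2) = 0 := by
      rcases mul_eq_zero.mp hid with h | h
      · exact h
      · exact absurd h (ne_of_gt hd2)
    exact hW₂ (by linarith)
  unfold triangleArea
  have := abs_pos.mpr hD
  linarith

end Aux
namespace Aux

lemma corner (K X Y : Line) (W₁ W₂ : ℝ × ℝ)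
    (hXY : ¬ X.Parallel Y)
    (hW₁X : W₁ ∈ X.pts) (hW₂Y : W₂ ∈ Y.pts)
    (hW₁Y : W₁ ∉ Y.pts) (hW₂X : W₂ ∉ X.pts)
    (hfV : ev K (Line.inter X Y) ≠ 0)
    (h1 : ev K W₁ * ev K (Line.inter X Y) ≤ 0)
    (h2 : ev K W₂ * ev K (Line.inter X Y) ≤ 0)
    (hnb : ¬(ev K W₁ = 0 ∧ ev K W₂ = 0)) :
    FormsTriangle K X Y ∧ triArea K X Y < triangleArea (Line.inter X Y) W₁ W₂ := by
  set V : ℝ × ℝ := Line.inter X Y with hVdef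
  have hVX : V ∈ X.pts := inter_mem_left hXY
  have hVY : V ∈ Y.pts := inter_mem_right hXY
  have eVX : X.a * V.1 + X.b * V.2 = X.c := hVX
  have eVY : Y.a * V.1 + Y.b * V.2 = Y.c := hVY
  have eW₁X : X.a * W₁.1 + X.b * W₁.2 = X.c := hW₁X
  have eW₂Y : Y.a * W₂.1 + Y.b * W₂.2 = Y.c := hW₂Y
  -- nonparallelism of K with X and Y
  have hKX : ¬ K.Parallel X := by
    intro hpar
    have := parallel_ev_const hpar hW₁X hVX
    rw [this] at h1
    exact hfV (by nlinarith)
  have hKY : ¬ K.Parallel Y := by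
    intro hpar
    have := parallel_ev_const hpar hW₂Y hVY
    rw [this] at h2
    exact hfV (by nlinarith)
  have hVW₁ : V ≠ W₁ := fun h => hW₁Y (h ▸ hVY)
  have hS : 0 < triangleArea V W₁ W₂ := area_pos hVX hW₁X hVW₁ hW₂X
  -- the parameters
  have hfV2 : 0 < ev K V ^ 2 := by positivity
  have hd₁ : ev K V - ev K W₁ ≠ 0 := by
    intro h; rw [sub_eq_zero] at h; rw [← h] at h1; exact hfV (by nlinarith)
  have hd₂ : ev K V - ev K W₂ ≠ 0 := by
    intro h; rw [sub_eq_zero] at h; rw [← h] at h2; exact hfV (by nlinarith)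
  set t₁ : ℝ := ev K V / (ev K V - ev K W₁) with ht₁def
  set t₂ : ℝ := ev K V / (ev K V - ev K W₂) with ht₂def
  have hden₁ : 0 < ev K V * (ev K V - ev K W₁) := by nlinarith
  have hden₂ : 0 < ev K V * (ev K V - ev K W₂) := by nlinarith
  have ht₁pos : 0 < t₁ := by
    have h' : t₁ = ev K V ^ 2 / (ev K V * (ev K V - ev K W₁)) := by
      rw [ht₁def]; field_simp
    rw [h']; positivity
  have ht₂pos : 0 < t₂ := by
    have h' : t₂ = ev K V ^ 2 / (ev K V * (ev K V - ev K W₂)) := by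
      rw [ht₂def]; field_simp
    rw [h']; positivity
  have h1t₁ : 1 - t₁ = (-(ev K W₁ * ev K V)) / (ev K V * (ev K V - ev K W₁)) := by
    rw [ht₁def]; field_simp; ring
  have h1t₂ : 1 - t₂ = (-(ev K W₂ * ev K V)) / (ev K V * (ev K V - ev K W₂)) := by
    rw [ht₂def]; field_simp; ring
  have ht₁le : t₁ ≤ 1 := by
    have : 0 ≤ 1 - t₁ := by rw [h1t₁]; exact div_nonneg (by linarith) hden₁.le
    linarith
  have ht₂le : t₂ ≤ 1 := by
    have : 0 ≤ 1 - t₂ := by rw [h1t₂]; exact div_nonneg (by linarith) hden₂.le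
    linarith
  have htt : t₁ * t₂ < 1 := by
    rcases not_and_or.mp hnb with h | h
    · have hlt : ev K W₁ * ev K V < 0 := lt_of_le_of_ne h1 (by
        intro he
        rcases mul_eq_zero.mp he with h' | h'
        · exact h h'
        · exact hfV h')
      have : 0 < 1 - t₁ := by rw [h1t₁]; exact div_pos (by linarith) hden₁
      nlinarith
    · have hlt : ev K W₂ * ev K V < 0 := lt_of_le_of_ne h2 (by
        intro he
        rcases mul_eq_zero.mp he with h' | h'
        · exact h h'
        · exact hfV h')
      have : 0 < 1 - t₂ := by rw [h1t₂]; exact div_pos (by linarith) hden₂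
      nlinarith
  have ht₁e : t₁ * (ev K V - ev K W₁) = ev K V := by
    rw [ht₁def]; field_simp
  have ht₂e : t₂ * (ev K V - ev K W₂) = ev K V := by
    rw [ht₂def]; field_simp
  simp only [ev] at ht₁e ht₂e
  -- intersection points
  set P₁ : ℝ × ℝ := (V.1 + t₁ * (W₁.1 - V.1), V.2 + t₁ * (W₁.2 - V.2)) with hP₁def
  set P₂ : ℝ × ℝ := (V.1 + t₂ * (W₂.1 - V.1), V.2 + t₂ * (W₂.2 - V.2)) with hP₂def
  have hP₁1 : P₁.1 = V.1 + t₁ * (W₁.1 - V.1) := by rw [hP₁def]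
  have hP₁2 : P₁.2 = V.2 + t₁ * (W₁.2 - V.2) := by rw [hP₁def]
  have hP₂1 : P₂.1 = V.1 + t₂ * (W₂.1 - V.1) := by rw [hP₂def]
  have hP₂2 : P₂.2 = V.2 + t₂ * (W₂.2 - V.2) := by rw [hP₂def]
  have hP₁X : P₁ ∈ X.pts := by
    simp only [Line.pts, Set.mem_setOf_eq, hP₁1, hP₁2]
    linear_combination (1 - t₁) * eVX + t₁ * eW₁X
  have hP₂Y : P₂ ∈ Y.pts := by
    simp only [Line.pts, Set.mem_setOf_eq, hP₂1, hP₂2]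
    linear_combination (1 - t₂) * eVY + t₂ * eW₂Y
  have hP₁K : P₁ ∈ K.pts := by
    simp only [Line.pts, Set.mem_setOf_eq, hP₁1, hP₁2]
    linear_combination (-1 : ℝ) * ht₁e
  have hP₂K : P₂ ∈ K.pts := by
    simp only [Line.pts, Set.mem_setOf_eq, hP₂1, hP₂2]
    linear_combination (-1 : ℝ) * ht₂e
  have hinterKX : Line.inter K X = P₁ := (inter_unique hKX hP₁K hP₁X).symm
  have hinterKY : Line.inter K Y = P₂ := (inter_unique hKY hP₂K hP₂Y).symm
  constructor
  · refine ⟨hKX, hKY, hXY, ?_⟩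
    rw [hinterKX]
    intro hmem
    have emem : Y.a * P₁.1 + Y.b * P₁.2 = Y.c := hmem
    rw [hP₁1, hP₁2] at emem
    have hz : t₁ * (Y.a * W₁.1 + Y.b * W₁.2 - Y.c) = 0 := by
      linear_combination emem + (t₁ - 1) * eVY
    rcases mul_eq_zero.mp hz with h | h
    · exact (ne_of_gt ht₁pos) h
    · exact hW₁Y (by simpa [Line.pts, sub_eq_zero] using h)
  · rw [triArea, hinterKX, hinterKY, ← hVdef]
    have hrot : triangleArea P₁ P₂ V = triangleArea V P₁ P₂ := by
      rw [triangleArea_rot, triangleArea_rot]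
    rw [hrot]
    have harea : triangleArea V P₁ P₂ = (t₁ * t₂) * triangleArea V W₁ W₂ := by
      unfold triangleArea
      rw [show (P₁.1 - V.1) * (P₂.2 - V.2) - (P₂.1 - V.1) * (P₁.2 - V.2) =
          (t₁ * t₂) * ((W₁.1 - V.1) * (W₂.2 - V.2) - (W₂.1 - V.1) * (W₁.2 - V.2)) by
        rw [hP₁1, hP₁2, hP₂1, hP₂2]; ring]
      rw [abs_mul, abs_of_pos (mul_pos ht₁pos ht₂pos)]
      ring
    rw [harea]
    exact mul_lt_of_lt_one_left hS htt
end Aux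
namespace Aux

lemma mem_convexHull_triple {A B C p : ℝ × ℝ}
    (hp : p ∈ convexHull ℝ ({A, B, C} : Set (ℝ × ℝ))) :
    ∃ x y z : ℝ, 0 ≤ x ∧ 0 ≤ y ∧ 0 ≤ z ∧ x + y + z = 1 ∧
      p.1 = x * A.1 + y * B.1 + z * C.1 ∧ p.2 = x * A.2 + y * B.2 + z * C.2 := by
  rw [convexHull_insert (by simp : ({B, C} : Set (ℝ × ℝ)).Nonempty), convexHull_pair,
    mem_convexJoin] at hp
  obtain ⟨a', ha', q, hq, hpq⟩ := hp
  rw [Set.mem_singleton_iff] at ha'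
  rw [ha'] at hpq
  obtain ⟨c, d, hc, hd, hcd, hq'⟩ :
      ∃ c d : ℝ, 0 ≤ c ∧ 0 ≤ d ∧ c + d = 1 ∧ c • B + d • C = q := hq
  obtain ⟨a, b, ha, hb, hab, hp'⟩ :
      ∃ a b : ℝ, 0 ≤ a ∧ 0 ≤ b ∧ a + b = 1 ∧ a • A + b • q = p := hpq
  refine ⟨a, b * c, b * d, ha, by positivity, by positivity, by nlinarith, ?_, ?_⟩
  · have h1 := congrArg Prod.fst hp'
    have hq1 := congrArg Prod.fst hq'
    simp only [Prod.fst_add, Prod.smul_fst, smul_eq_mul] at h1 hq1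
    rw [← h1, ← hq1]; ring
  · have h2 := congrArg Prod.snd hp'
    have hq2 := congrArg Prod.snd hq'
    simp only [Prod.snd_add, Prod.smul_snd, smul_eq_mul] at h2 hq2
    rw [← h2, ← hq2]; ring

lemma interior_ev_ne (X : Line) (S : Set (ℝ × ℝ)) (c : ℝ) (hc : c ≠ 0)
    (hS : ∀ q ∈ S, 0 ≤ ev X q * c) {p : ℝ × ℝ}
    (hp : p ∈ interior (convexHull ℝ S)) : ev X p ≠ 0 := by
  intro hev
  have hconv : Convex ℝ {q : ℝ × ℝ | 0 ≤ ev X q * c} := by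
    intro u hu v hv s t hs ht hst
    simp only [Set.mem_setOf_eq, ev] at hu hv ⊢
    have e1 : (s • u + t • v).1 = s * u.1 + t * v.1 := by
      simp [Prod.fst_add, Prod.smul_fst, smul_eq_mul]
    have e2 : (s • u + t • v).2 = s * u.2 + t * v.2 := by
      simp [Prod.snd_add, Prod.smul_snd, smul_eq_mul]
    rw [e1, e2]
    have hx : s * (X.c * c) + t * (X.c * c) = X.c * c := by
      rw [← add_mul, hst, one_mul]
    nlinarith [mul_nonneg hs hu, mul_nonneg ht hv, hx]
  have hhull : convexHull ℝ S ⊆ {q : ℝ × ℝ | 0 ≤ ev X q * c} := convexHull_min hS hconv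
  rw [mem_interior_iff_mem_nhds, Metric.mem_nhds_iff] at hp
  obtain ⟨ε, hε, hball⟩ := hp
  set δ : ℝ := ε / (2 * (|X.a| + |X.b|) + 1) with hδdef
  have hδpos : 0 < δ := by positivity
  have hbound : δ * (|X.a| + |X.b|) < ε := by
    rw [hδdef, div_mul_eq_mul_div, div_lt_iff₀ (by positivity)]
    nlinarith [abs_nonneg X.a, abs_nonneg X.b]
  have hdista : |δ * X.a| < ε := by
    rw [abs_mul, abs_of_pos hδpos]
    nlinarith [abs_nonneg X.a, abs_nonneg X.b, mul_nonneg hδpos.le (abs_nonneg X.b)]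
  have hdistb : |δ * X.b| < ε := by
    rw [abs_mul, abs_of_pos hδpos]
    nlinarith [abs_nonneg X.a, abs_nonneg X.b, mul_nonneg hδpos.le (abs_nonneg X.a)]
  have hmem : ∀ s : ℝ, |s| = 1 →
      (p.1 + s * (δ * X.a), p.2 + s * (δ * X.b)) ∈ {q : ℝ × ℝ | 0 ≤ ev X q * c} := by
    intro s hs
    apply hhull
    apply hball
    rw [Metric.mem_ball, Prod.dist_eq]
    apply max_lt
    · show dist (p.1 + s * (δ * X.a)) p.1 < ε
      rw [Real.dist_eq, show p.1 + s * (δ * X.a) - p.1 = s * (δ * X.a) by ring,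
        abs_mul, hs, one_mul]
      exact hdista
    · show dist (p.2 + s * (δ * X.b)) p.2 < ε
      rw [Real.dist_eq, show p.2 + s * (δ * X.b) - p.2 = s * (δ * X.b) by ring,
        abs_mul, hs, one_mul]
      exact hdistb
  have hq1 := hmem 1 (by norm_num)
  have hq2 := hmem (-1) (by norm_num)
  simp only [Set.mem_setOf_eq, ev] at hq1 hq2 hev
  have hn : 0 < X.a ^ 2 + X.b ^ 2 := normsq_pos X
  have hpc : (X.a * p.1 + X.b * p.2 - X.c) * c = 0 := by rw [hev, zero_mul]
  have e1 : 0 ≤ (δ * (X.a ^ 2 + X.b ^ 2)) * c := by nlinarith [hq1, hpc]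
  have e2 : (δ * (X.a ^ 2 + X.b ^ 2)) * c ≤ 0 := by nlinarith [hq2, hpc]
  have h0 : (δ * (X.a ^ 2 + X.b ^ 2)) * c = 0 := le_antisymm e2 e1
  rcases mul_eq_zero.mp h0 with h | h
  · nlinarith
  · exact hc h

lemma pick0 {x y z a b c : ℝ} (hx : 0 < x) (hy : 0 < y) (hz : 0 < z)
    (h : x * a + y * b + z * c = 0) (hne : ¬(a = 0 ∧ b = 0 ∧ c = 0)) :
    (a ≠ 0 ∧ b * a ≤ 0 ∧ c * a ≤ 0) ∨
    (b ≠ 0 ∧ a * b ≤ 0 ∧ c * b ≤ 0) ∨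
    (c ≠ 0 ∧ a * c ≤ 0 ∧ b * c ≤ 0) := by
  rcases lt_trichotomy a 0 with ha | ha | ha <;>
    rcases lt_trichotomy b 0 with hb | hb | hb <;>
      rcases lt_trichotomy c 0 with hc | hc | hc <;>
    first
      | (exfalso; exact hne ⟨by linarith, by linarith, by linarith⟩)
      | (exfalso; nlinarith)
      | (exact Or.inl ⟨by linarith, by nlinarith, by nlinarith⟩)
      | (exact Or.inr (Or.inl ⟨by linarith, by nlinarith, by nlinarith⟩))
      | (exact Or.inr (Or.inr ⟨by linarith, by nlinarith, by nlinarith⟩))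

end Aux
namespace Aux

lemma crossing (L M N K : Line) (h : FormsTriangle L M N) (p : ℝ × ℝ)
    (hpK : p ∈ K.pts) (hp : p ∈ openTriangle L M N) :
    (FormsTriangle K L M ∧ triArea K L M < triArea L M N) ∨
    (FormsTriangle K L N ∧ triArea K L N < triArea L M N) ∨
    (FormsTriangle K M N ∧ triArea K M N < triArea L M N) := by
  obtain ⟨hLM, hLN, hMN, hALM⟩ := h
  set A := Line.inter L M with hA
  set B := Line.inter L N with hB
  set C := Line.inter M N with hC
  have hAL : A ∈ L.pts := inter_mem_left hLM
  have hAM : A ∈ M.pts := inter_mem_right hLM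
  have hBL : B ∈ L.pts := inter_mem_left hLN
  have hBN : B ∈ N.pts := inter_mem_right hLN
  have hCM : C ∈ M.pts := inter_mem_left hMN
  have hCN : C ∈ N.pts := inter_mem_right hMN
  have hAN : A ∉ N.pts := hALM
  have hBM : B ∉ M.pts := by
    intro hm
    have hE : B = A := inter_unique hLM hBL hm
    exact hAN (by rw [← hE]; exact hBN)
  have hCL : C ∉ L.pts := by
    intro hm
    have hE : C = A := inter_unique hLM hm hCM
    exact hAN (by rw [← hE]; exact hCN)
  have hABne : A ≠ B := by
    intro hE; exact hAN (by rw [hE]; exact hBN)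
  have hevAN : ev N A ≠ 0 := fun h0 => hAN ((mem_pts_iff N A).mpr h0)
  have hevBM : ev M B ≠ 0 := fun h0 => hBM ((mem_pts_iff M B).mpr h0)
  have hevCL : ev L C ≠ 0 := fun h0 => hCL ((mem_pts_iff L C).mpr h0)
  have hevAL : ev L A = 0 := (mem_pts_iff L A).mp hAL
  have hevAM : ev M A = 0 := (mem_pts_iff M A).mp hAM
  have hevBL : ev L B = 0 := (mem_pts_iff L B).mp hBL
  have hevBN : ev N B = 0 := (mem_pts_iff N B).mp hBN
  have hevCM : ev M C = 0 := (mem_pts_iff M C).mp hCM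
  have hevCN : ev N C = 0 := (mem_pts_iff N C).mp hCN
  have hpmem : p ∈ interior (convexHull ℝ ({A, B, C} : Set (ℝ × ℝ))) := hp
  have htrip : ∀ (X : Line) (q : ℝ × ℝ), q ∈ ({A, B, C} : Set (ℝ × ℝ)) →
      (q = A ∨ q = B ∨ q = C) := by
    intro X q hq
    simpa [Set.mem_insert_iff, Set.mem_singleton_iff] using hq
  have hpN : ev N p ≠ 0 := by
    refine interior_ev_ne N {A, B, C} (ev N A) hevAN ?_ hpmem
    intro q hq
    rcases htrip N q hq with rfl | rfl | rfl
    · exact mul_self_nonneg _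
    · rw [hevBN, zero_mul]
    · rw [hevCN, zero_mul]
  have hpM : ev M p ≠ 0 := by
    refine interior_ev_ne M {A, B, C} (ev M B) hevBM ?_ hpmem
    intro q hq
    rcases htrip M q hq with rfl | rfl | rfl
    · rw [hevAM, zero_mul]
    · exact mul_self_nonneg _
    · rw [hevCM, zero_mul]
  have hpL : ev L p ≠ 0 := by
    refine interior_ev_ne L {A, B, C} (ev L C) hevCL ?_ hpmem
    intro q hq
    rcases htrip L q hq with rfl | rfl | rfl
    · rw [hevAL, zero_mul]
    · rw [hevBL, zero_mul]
    · exact mul_self_nonneg _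
  obtain ⟨x, y, z, hx0, hy0, hz0, hsum, hp1, hp2⟩ :=
    mem_convexHull_triple (interior_subset hpmem)
  have eNB : N.a * B.1 + N.b * B.2 = N.c := hBN
  have eNC : N.a * C.1 + N.b * C.2 = N.c := hCN
  have eMA : M.a * A.1 + M.b * A.2 = M.c := hAM
  have eMC : M.a * C.1 + M.b * C.2 = M.c := hCM
  have eLA : L.a * A.1 + L.b * A.2 = L.c := hAL
  have eLB : L.a * B.1 + L.b * B.2 = L.c := hBL
  have hevNp : ev N p = x * ev N A := by
    simp only [ev]; rw [hp1, hp2]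
    linear_combination y * eNB + z * eNC + N.c * hsum
  have hevMp : ev M p = y * ev M B := by
    simp only [ev]; rw [hp1, hp2]
    linear_combination x * eMA + z * eMC + M.c * hsum
  have hevLp : ev L p = z * ev L C := by
    simp only [ev]; rw [hp1, hp2]
    linear_combination x * eLA + y * eLB + L.c * hsum
  have hx : 0 < x := by
    rcases lt_or_eq_of_le hx0 with h' | h'
    · exact h'
    · exact absurd (by rw [hevNp, ← h', zero_mul]) hpN
  have hy : 0 < y := by
    rcases lt_or_eq_of_le hy0 with h' | h'
    · exact h'
    · exact absurd (by rw [hevMp, ← h', zero_mul]) hpM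
  have hz : 0 < z := by
    rcases lt_or_eq_of_le hz0 with h' | h'
    · exact h'
    · exact absurd (by rw [hevLp, ← h', zero_mul]) hpL
  have hpK0 : ev K p = 0 := (mem_pts_iff K p).mp hpK
  have hcombo : x * ev K A + y * ev K B + z * ev K C = 0 := by
    simp only [ev] at hpK0 ⊢
    rw [hp1, hp2] at hpK0
    linear_combination hpK0 - K.c * hsum
  have hnz : ¬(ev K A = 0 ∧ ev K B = 0 ∧ ev K C = 0) := by
    rintro ⟨h1, h2, h3⟩
    have hSpos : 0 < triangleArea A B C := area_pos hAL hBL hABne hCL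
    have hD : (B.1 - A.1) * (C.2 - A.2) - (C.1 - A.1) * (B.2 - A.2) ≠ 0 := by
      intro h0
      rw [triangleArea, h0] at hSpos
      simp at hSpos
    simp only [ev] at h1 h2 h3
    have ha' : K.a * (B.1 - A.1) + K.b * (B.2 - A.2) = 0 := by linarith
    have hb' : K.a * (C.1 - A.1) + K.b * (C.2 - A.2) = 0 := by linarith
    have hKa : K.a * ((B.1 - A.1) * (C.2 - A.2) - (C.1 - A.1) * (B.2 - A.2)) = 0 := by
      linear_combination (C.2 - A.2) * ha' - (B.2 - A.2) * hb'
    have hKb : K.b * ((B.1 - A.1) * (C.2 - A.2) - (C.1 - A.1) * (B.2 - A.2)) = 0 := by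
      linear_combination (B.1 - A.1) * hb' - (C.1 - A.1) * ha'
    have hKa0 : K.a = 0 := by
      rcases mul_eq_zero.mp hKa with h' | h'
      · exact h'
      · exact absurd h' hD
    have hKb0 : K.b = 0 := by
      rcases mul_eq_zero.mp hKb with h' | h'
      · exact h'
      · exact absurd h' hD
    exact K.hab (by rw [hKa0, hKb0])
  rcases pick0 hx hy hz hcombo hnz with ⟨hne, hs1, hs2⟩ | ⟨hne, hs1, hs2⟩ | ⟨hne, hs1, hs2⟩
  · -- vertex A : cut by lines L and M
    have hnb : ¬(ev K B = 0 ∧ ev K C = 0) := by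
      rintro ⟨u, v⟩
      rw [u, v] at hcombo
      have : x * ev K A = 0 := by linarith
      rcases mul_eq_zero.mp this with h' | h'
      · exact (ne_of_gt hx) h'
      · exact hne h'
    obtain ⟨hF, hlt⟩ := corner K L M B C hLM hBL hCM hBM hCL hne hs1 hs2 hnb
    exact Or.inl ⟨hF, hlt⟩
  · -- vertex B : cut by lines L and N
    have hnb : ¬(ev K A = 0 ∧ ev K C = 0) := by
      rintro ⟨u, v⟩
      rw [u, v] at hcombo
      have : y * ev K B = 0 := by linarith
      rcases mul_eq_zero.mp this with h' | h'
      · exact (ne_of_gt hy) h'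
      · exact hne h'
    obtain ⟨hF, hlt⟩ := corner K L N A C hLN hAL hCN hAN hCL hne hs1 hs2 hnb
    refine Or.inr (Or.inl ⟨hF, ?_⟩)
    have he : triArea L M N = triangleArea B A C := by
      rw [triArea, ← hA, ← hB, ← hC, triangleArea_swap]
    rw [he]
    exact hlt
  · -- vertex C : cut by lines M and N
    have hnb : ¬(ev K A = 0 ∧ ev K B = 0) := by
      rintro ⟨u, v⟩
      rw [u, v] at hcombo
      have : z * ev K C = 0 := by linarith
      rcases mul_eq_zero.mp this with h' | h'
      · exact (ne_of_gt hz) h'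
      · exact hne h'
    obtain ⟨hF, hlt⟩ := corner K M N A B hMN hAM hBN hAN hBM hne hs1 hs2 hnb
    refine Or.inr (Or.inr ⟨hF, ?_⟩)
    have he : triArea L M N = triangleArea C A B := by
      rw [triArea, ← hA, ← hB, ← hC, triangleArea_rot]
    rw [he]
    exact hlt

end Aux
/-- For every arrangement of `n ≥ 3` distinct lines, the number of minimum-area
triangles is at most the number of triangular faces of the arrangement, and
hence — assuming the Bader–Clément (Kobon-triangle) bound on the number of
triangular faces — at most `⌊n(n-2)/3⌋`. -/
theorem stmt18 (n : ℕ) (hn : 3 ≤ n) (L : Fin n → Line)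
    (hinj : Function.Injective L)
    (minTris : Finset (Fin n × Fin n × Fin n))
    (hminTris : minTris = Finset.univ.filter (fun t : Fin n × Fin n × Fin n =>
      t.1 < t.2.1 ∧ t.2.1 < t.2.2 ∧ FormsTriangle (L t.1) (L t.2.1) (L t.2.2) ∧
      ∀ s : Fin n × Fin n × Fin n, FormsTriangle (L s.1) (L s.2.1) (L s.2.2) →
        triArea (L t.1) (L t.2.1) (L t.2.2) ≤ triArea (L s.1) (L s.2.1) (L s.2.2)))
    (triFaces : Finset (Fin n × Fin n × Fin n))
    (htriFaces : triFaces = Finset.univ.filter (fun t : Fin n × Fin n × Fin n =>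
      t.1 < t.2.1 ∧ t.2.1 < t.2.2 ∧ FormsTriangle (L t.1) (L t.2.1) (L t.2.2) ∧
      ∀ m : Fin n, Line.pts (L m) ∩ openTriangle (L t.1) (L t.2.1) (L t.2.2) = ∅))
    (hKobon : triFaces.card ≤ n * (n - 2) / 3) :
    minTris.card ≤ triFaces.card ∧ minTris.card ≤ n * (n - 2) / 3 := by
  have hsub : minTris ⊆ triFaces := by
    rw [hminTris, htriFaces]
    intro t ht
    simp only [Finset.mem_filter, Finset.mem_univ, true_and] at ht ⊢
    obtain ⟨h1, h2, h3, h4⟩ := ht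
    refine ⟨h1, h2, h3, ?_⟩
    intro m
    by_contra hne
    rw [← ne_eq, ← Set.nonempty_iff_ne_empty] at hne
    obtain ⟨p, hp1, hp2⟩ := hne
    rcases Aux.crossing (L t.1) (L t.2.1) (L t.2.2) (L m) h3 p hp1 hp2 with
      ⟨hF, hlt⟩ | ⟨hF, hlt⟩ | ⟨hF, hlt⟩
    · have := h4 (m, t.1, t.2.1) hF
      linarith
    · have := h4 (m, t.1, t.2.2) hF
      linarith
    · have := h4 (m, t.2.1, t.2.2) hF
      linarith
  have hcard := Finset.card_le_card hsub
  exact ⟨hcard, le_trans hcard hKobon⟩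
end
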